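/- Let A = ⟨Q, Σ⟩ be a DFA with a fixed linear order on Σ, and let ≺ denote the induced shortlex order on Σ*. Suppose w ∈ Σ* is the ≺-least word among all words w' with excl(w') = excl(w) and dupl(w') = dupl(w). Then every prefix u of w is the ≺-least word among all words u' with excl(u') = excl(u) and dupl(u') = dupl(u). -/

import Mathlib

open Finset

/-- The action of a word (list of letters) on a state, applying letters left to right. -/
def act {Q A : Type*} (δ : Q → A → Q) (q : Q) (w : List A) : Q := w.foldl δ q

/-- The image of a set of states under the action of a word. -/
def img {Q A : Type*} [DecidableEq Q] (δ : Q → A → Q) (P : Finset Q) (w : List A) : Finset Q :=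
  P.image (fun q => act δ q w)

/-- `excl δ w = Q \ Q·w`. -/
def excl {Q A : Type*} [Fintype Q] [DecidableEq Q] (δ : Q → A → Q) (w : List A) : Finset Q :=
  Finset.univ \ img δ Finset.univ w

/-- `dupl δ w` : the set of states with at least two preimages under the action of `w`. -/
def dupl {Q A : Type*} [Fintype Q] [DecidableEq Q] (δ : Q → A → Q) (w : List A) : Finset Q :=
  Finset.univ.filter (fun p => ∃ q₁ q₂ : Q, q₁ ≠ q₂ ∧ act δ q₁ w = p ∧ act δ q₂ w = p)

/-- A DFA is completely reachable if every nonempty subset of states is the image of the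
full state set under the action of some word. -/
def CompletelyReachable {Q A : Type*} [Fintype Q] [DecidableEq Q] (δ : Q → A → Q) : Prop :=
  ∀ P : Finset Q, P.Nonempty → ∃ w : List A, img δ Finset.univ w = P

/-- The shortlex order on words induced by a linear order on the alphabet. -/
def Shortlex {A : Type*} [LinearOrder A] (w w' : List A) : Prop :=
  w.length < w'.length ∨ (w.length = w'.length ∧ List.Lex (· < ·) w w')

lemma act_append {Q A : Type*} (δ : Q → A → Q) (q : Q) (u v : List A) :
    act δ q (u ++ v) = act δ (act δ q u) v := List.foldl_append

lemma img_eq_of_excl_eq {Q A : Type*} [Fintype Q] [DecidableEq Q] (δ : Q → A → Q)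
    {u u' : List A} (h : excl δ u' = excl δ u) : img δ Finset.univ u' = img δ Finset.univ u := by
  have h2 := congrArg (Finset.univ \ ·) h
  simpa [excl, sdiff_sdiff_right_self, Finset.inf_eq_inter, Finset.univ_inter] using h2

lemma mem_dupl_iff {Q A : Type*} [Fintype Q] [DecidableEq Q] (δ : Q → A → Q) (w : List A)
    (p : Q) : p ∈ dupl δ w ↔ ∃ q₁ q₂ : Q, q₁ ≠ q₂ ∧ act δ q₁ w = p ∧ act δ q₂ w = p := by
  simp [dupl]

lemma dupl_append_eq {Q A : Type*} [Fintype Q] [DecidableEq Q] (δ : Q → A → Q)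
    {u u' : List A} (v : List A) (himg : img δ Finset.univ u' = img δ Finset.univ u)
    (hd : dupl δ u' = dupl δ u) : dupl δ (u' ++ v) = dupl δ (u ++ v) := by
  have key : ∀ (x y : List A), img δ Finset.univ x = img δ Finset.univ y →
      dupl δ x = dupl δ y → dupl δ (x ++ v) ⊆ dupl δ (y ++ v) := by
    intro x y hi hdd p hp
    rw [mem_dupl_iff] at hp
    obtain ⟨q₁, q₂, hne, h1, h2⟩ := hp
    rw [act_append] at h1 h2
    by_cases hr : act δ q₁ x = act δ q₂ x
    · -- act δ q₁ x ∈ dupl δ x = dupl δ y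
      have : act δ q₁ x ∈ dupl δ y := by
        rw [← hdd, mem_dupl_iff]; exact ⟨q₁, q₂, hne, rfl, hr.symm⟩
      rw [mem_dupl_iff] at this
      obtain ⟨r₁, r₂, hrne, e1, e2⟩ := this
      rw [mem_dupl_iff]
      refine ⟨r₁, r₂, hrne, ?_, ?_⟩
      · rw [act_append, e1]; exact h1
      · rw [act_append, e2]; exact h1
    · -- two distinct states in img x = img y
      have m1 : act δ q₁ x ∈ img δ Finset.univ y := by
        rw [← hi]; exact Finset.mem_image_of_mem _ (Finset.mem_univ q₁)
      have m2 : act δ q₂ x ∈ img δ Finset.univ y := by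
        rw [← hi]; exact Finset.mem_image_of_mem _ (Finset.mem_univ q₂)
      rw [img, Finset.mem_image] at m1 m2
      obtain ⟨s₁, -, e1⟩ := m1
      obtain ⟨s₂, -, e2⟩ := m2
      rw [mem_dupl_iff]
      refine ⟨s₁, s₂, ?_, ?_, ?_⟩
      · intro he; apply hr; rw [← e1, ← e2, he]
      · rw [act_append, e1]; exact h1
      · rw [act_append, e2]; exact h2
  exact Finset.Subset.antisymm (key u' u himg hd) (key u u' himg.symm hd.symm)

lemma lex_of_lex_append {A : Type*} [LinearOrder A] :
    ∀ (u u' v : List A), u.length = u'.length → List.Lex (· < ·) (u ++ v) (u' ++ v) →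
      u ≠ u' → List.Lex (· < ·) u u'
  | [], [], _, _, _, hne => absurd rfl hne
  | [], b :: u', _, h, _, _ => by simp at h
  | a :: u, [], _, h, _, _ => by simp at h
  | a :: u, b :: u', v, hl, hlex, hne => by
    cases hlex with
    | rel hab => exact List.Lex.rel hab
    | cons htail =>
      by_cases hu : u = u'
      · exact absurd (by rw [hu]) hne
      · exact List.Lex.cons (lex_of_lex_append u u' v (by simpa using hl) htail hu)


/-- If w is the shortlex-least word with its pair (excl, dupl), then every prefix u of w is
the shortlex-least word with its pair (excl, dupl). -/
theorem prefix_of_shortlex_minimal {Q A : Type*} [Fintype Q] [DecidableEq Q] [LinearOrder A]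
    (δ : Q → A → Q) (w : List A)
    (hmin : ∀ w' : List A, excl δ w' = excl δ w → dupl δ w' = dupl δ w → w' ≠ w →
      Shortlex w w')
    (u v : List A) (huv : w = u ++ v) :
    ∀ u' : List A, excl δ u' = excl δ u → dupl δ u' = dupl δ u → u' ≠ u → Shortlex u u' := by
  intro u' hexcl hdupl hne
  have himg := img_eq_of_excl_eq δ hexcl
  have img_append : ∀ (P : Finset Q) (x y : List A), img δ P (x ++ y) = img δ (img δ P x) y := by
    intro P x y
    simp only [img, Finset.image_image, act_append]; rfl
  have hexcl' : excl δ (u' ++ v) = excl δ w := by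
    rw [huv]
    unfold excl
    rw [img_append, img_append, himg]
  have hdupl' : dupl δ (u' ++ v) = dupl δ w := by
    rw [huv]; exact dupl_append_eq δ v himg hdupl
  have hne' : u' ++ v ≠ w := by
    rw [huv]; intro h; exact hne (List.append_cancel_right h)
  have hsl := hmin (u' ++ v) hexcl' hdupl' hne'
  rw [huv] at hsl
  cases hsl with
  | inl h => left; simpa using h
  | inr h =>
    obtain ⟨hl, hlex⟩ := h
    have hl' : u.length = u'.length := by simpa using hl
    exact Or.inr ⟨hl', lex_of_lex_append u u' v hl' hlex (Ne.symm hne)⟩
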